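/- (Lemma 5, first estimate, concrete form) Suppose all partial derivatives D^{(α,β)}κ = ∂^{α+β}κ/∂s^α∂t^β with 0 ≤ α+β ≤ 2r+3 exist, are continuous on [0,1]×[0,1], and satisfy |D^{(α,β)}κ(s,t)| ≤ C₂. Then there exists a constant C > 0, independent of n, such that for every continuous ψ : [0,1] → ℝ, writing x := Kψ and z := K(x − Q_n x), one has ‖z − Q_n z‖_∞ ≤ C ‖ψ‖_∞ h^{4r+3}. -/

import Mathlib

open Set MeasureTheory

/-- Equidistant interpolation nodes: `τ_j^i = t_{j-1} + i·h/(2r)` with `h = 1/n`. -/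
noncomputable def tau (n r j i : ℕ) : ℝ :=
  ((j : ℝ) - 1) / n + (i : ℝ) / (2 * r * n)

/-- The unique polynomial of degree ≤ 2r interpolating `x` at the nodes of `Δ_j`. -/
noncomputable def interpPoly (n r j : ℕ) (x : ℝ → ℝ) : Polynomial ℝ :=
  Lagrange.interpolate (Finset.range (2 * r + 1)) (tau n r j) (fun i => x (tau n r j i))

/-- The interpolatory projection `Q_n x`: on each subinterval `Δ_j = [(j-1)/n, j/n]` it
coincides with the polynomial of degree ≤ 2r interpolating `x` at the nodes `τ_j^i`.
(At a partition point both adjacent pieces take the value `x(t_j)`.) -/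
noncomputable def Qn (n r : ℕ) (x : ℝ → ℝ) (t : ℝ) : ℝ :=
  (interpPoly n r (min n (⌊t * (n : ℝ)⌋₊ + 1)) x).eval t

/-- The Fredholm integral operator with kernel `κ`. -/
noncomputable def Kop (κ : ℝ → ℝ → ℝ) (x : ℝ → ℝ) (s : ℝ) : ℝ :=
  ∫ t in (0:ℝ)..1, κ s t * x t

/-- Supremum norm on `[0,1]`. -/
noncomputable def supNorm (f : ℝ → ℝ) : ℝ :=
  ⨆ t : Set.Icc (0:ℝ) 1, |f t.1|

/-- The nodal polynomial `Φ_j(t) = ∏_{i=0}^{2r} (t − τ_j^i)`. -/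
noncomputable def Phi (n r j : ℕ) (t : ℝ) : ℝ :=
  ∏ i ∈ Finset.range (2 * r + 1), (t - tau n r j i)

/-- `‖x‖_{k,∞} = max_{0 ≤ i ≤ k} ‖x^{(i)}‖_∞` (derivatives taken within `[0,1]`). -/
noncomputable def cknorm (k : ℕ) (x : ℝ → ℝ) : ℝ :=
  ⨆ i : Fin (k + 1), supNorm (iteratedDerivWithin i x (Set.Icc 0 1))

/-- Absolute difference of two points of `Icc a b` is at most `b - a`. -/
lemma abs_sub_le_of_Icc {a b x y : ℝ} (hx : x ∈ Icc a b) (hy : y ∈ Icc a b) :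
    |x - y| ≤ b - a := by
  rw [abs_sub_le_iff]; constructor <;> linarith [hx.1, hx.2, hy.1, hy.2]

/-- Iterated derivative of a polynomial of degree ≤ k, taken k times, is constant. -/
lemma iter_deriv_eq_C (p : Polynomial ℝ) (k : ℕ) (h : p.natDegree ≤ k) :
    Polynomial.derivative^[k] p = Polynomial.C ((k.factorial : ℝ) * p.coeff k) := by
  have hdeg : (Polynomial.derivative^[k] p).natDegree = 0 := by
    have := Polynomial.natDegree_iterate_derivative p k
    omega
  have := Polynomial.eq_C_of_natDegree_eq_zero hdeg
  rw [this, Polynomial.coeff_iterate_derivative]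
  simp [Nat.descFactorial_self, nsmul_eq_mul]

/-- Iterated Rolle: if `F 0` vanishes at `k+1` increasing points of `[0,1]` and
`F (i+1)` is the derivative of `F i` on `(0,1)`, then `F k` vanishes somewhere in `[0,1]`. -/
lemma iterRolle (k : ℕ) (F : ℕ → ℝ → ℝ)
    (hC : ∀ i < k, ContinuousOn (F i) (Icc 0 1))
    (hD : ∀ i < k, ∀ x ∈ Ioo (0:ℝ) 1, HasDerivAt (F i) (F (i+1) x) x)
    (z : Fin (k+1) → ℝ) (hz : StrictMono z) (hz01 : ∀ i, z i ∈ Icc (0:ℝ) 1)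
    (h0 : ∀ i, F 0 (z i) = 0) : ∃ ξ ∈ Icc (0:ℝ) 1, F k ξ = 0 := by
  induction k generalizing F with
  | zero => exact ⟨z 0, hz01 0, h0 0⟩
  | succ k ih =>
    have hstep : ∀ i : Fin (k+1), ∃ c ∈ Ioo (z i.castSucc) (z i.succ), F 1 c = 0 := by
      intro i
      have hab : z i.castSucc < z i.succ := hz (by simp [Fin.castSucc_lt_succ_iff])
      have hsub : Icc (z i.castSucc) (z i.succ) ⊆ Icc (0:ℝ) 1 :=
        Icc_subset_Icc (hz01 _).1 (hz01 _).2
      have hsub' : Ioo (z i.castSucc) (z i.succ) ⊆ Ioo (0:ℝ) 1 := fun u hu =>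
        ⟨lt_of_le_of_lt (hz01 i.castSucc).1 hu.1, lt_of_lt_of_le hu.2 (hz01 i.succ).2⟩
      exact exists_hasDerivAt_eq_zero hab ((hC 0 (Nat.succ_pos k)).mono hsub)
        ((h0 _).trans (h0 _).symm) (fun x hx => hD 0 (Nat.succ_pos k) x (hsub' hx))
    choose c hc hc0 using hstep
    have hcmono : StrictMono c := by
      intro i j hij
      calc c i < z i.succ := (hc i).2
        _ ≤ z j.castSucc := hz.monotone (by
            simp only [Fin.le_def, Fin.val_succ, Fin.coe_castSucc]
            omega)
        _ < c j := (hc j).1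
    refine ih (fun i => F (i+1)) (fun i hi => hC (i+1) (by omega))
      (fun i hi x hx => hD (i+1) (by omega) x hx) c hcmono
      (fun i => ⟨le_of_lt (lt_of_le_of_lt (hz01 i.castSucc).1 (hc i).1),
        le_of_lt (lt_of_lt_of_le (hc i).2 (hz01 i.succ).2)⟩) hc0
/-- Lagrange interpolation error bound. -/
lemma interp_err (k : ℕ) (F : ℕ → ℝ → ℝ)
    (hC : ∀ i ≤ k, ContinuousOn (F i) (Icc 0 1))
    (hD : ∀ i ≤ k, ∀ x ∈ Ioo (0:ℝ) 1, HasDerivAt (F i) (F (i+1) x) x)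
    (M : ℝ) (hM : ∀ x ∈ Icc (0:ℝ) 1, |F (k+1) x| ≤ M)
    (s : Finset ℕ) (v : ℕ → ℝ) (hvs : Set.InjOn v s) (hcard : s.card = k+1)
    (hvI : ∀ i ∈ s, v i ∈ Icc (0:ℝ) 1)
    (y : ℕ → ℝ) (hy : ∀ i ∈ s, y i = F 0 (v i))
    (t : ℝ) (ht : t ∈ Icc (0:ℝ) 1) :
    |F 0 t - (Lagrange.interpolate s v y).eval t| ≤
      M / (k+1).factorial * ∏ i ∈ s, |t - v i| := by
  have hM0 : 0 ≤ M := le_trans (abs_nonneg _) (hM t ht)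
  set p := Lagrange.interpolate s v y with hp
  by_cases htv : ∃ i ∈ s, v i = t
  · obtain ⟨i, hi, hvi⟩ := htv
    have : p.eval t = y i := by rw [← hvi]; exact Lagrange.eval_interpolate_at_node y hvs hi
    rw [this, hy i hi, hvi, sub_self, abs_zero]
    positivity
  push_neg at htv
  have hprodne : (∏ i ∈ s, (t - v i)) ≠ 0 := by
    rw [Finset.prod_ne_zero_iff]
    intro i hi
    exact sub_ne_zero.2 fun h => htv i hi (by linarith [h.symm] : v i = t)
  set c : ℝ := (F 0 t - p.eval t) / ∏ i ∈ s, (t - v i) with hc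
  set nod := Lagrange.nodal s v with hnod
  set G : ℕ → ℝ → ℝ := fun j u =>
    F j u - (Polynomial.derivative^[j] p).eval u - c * (Polynomial.derivative^[j] nod).eval u
    with hG
  -- the zero set
  have htnotmem : t ∉ s.image v := by
    simp only [Finset.mem_image]; rintro ⟨i, hi, hvi⟩; exact htv i hi hvi
  set S : Finset ℝ := insert t (s.image v) with hS
  have hScard : S.card = k + 2 := by
    rw [hS, Finset.card_insert_of_notMem htnotmem, Finset.card_image_of_injOn hvs, hcard]
  have hzero : ∀ u ∈ S, G 0 u = 0 := by
    intro u hu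
    rw [hS, Finset.mem_insert] at hu
    simp only [hG, Function.iterate_zero_apply]
    rcases hu with rfl | hu
    · have : nod.eval u = ∏ i ∈ s, (u - v i) := Lagrange.eval_nodal
      rw [this, hc]
      field_simp
      ring
    · obtain ⟨i, hi, rfl⟩ := Finset.mem_image.1 hu
      rw [Lagrange.eval_interpolate_at_node y hvs hi, hy i hi,
        hnod, Lagrange.eval_nodal_at_node hi]
      ring
  -- sorted enumeration of S
  have hmem : ∀ u ∈ S, u ∈ Icc (0:ℝ) 1 := by
    intro u hu
    rw [hS, Finset.mem_insert] at hu
    rcases hu with rfl | hu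
    · exact ht
    · obtain ⟨i, hi, rfl⟩ := Finset.mem_image.1 hu; exact hvI i hi
  set z : Fin (k+2) → ℝ := fun i => (S.orderIsoOfFin hScard i : ℝ) with hz
  have hzmono : StrictMono z := fun i j hij => by
    exact_mod_cast (S.orderIsoOfFin hScard).strictMono hij
  have hzmem : ∀ i, z i ∈ S := fun i => (S.orderIsoOfFin hScard i).2
  -- apply iterated Rolle to G at level k+1
  obtain ⟨ξ, hξI, hξ⟩ := iterRolle (k+1) G
    (fun i hi => ((hC i (by omega)).sub (Polynomial.continuous _).continuousOn).sub
      (continuous_const.mul (Polynomial.continuous _)).continuousOn)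
    (fun i hi x hx => by
      have h1 := hD i (by omega) x hx
      have h2 := (Polynomial.derivative^[i] p).hasDerivAt (x := x)
      have h3 := (Polynomial.derivative^[i] nod).hasDerivAt (x := x)
      have := (h1.fun_sub h2).fun_sub ((h3.const_mul c))
      simpa [hG, Function.iterate_succ_apply'] using this)
    z hzmono (fun i => hmem _ (hzmem i)) (fun i => hzero _ (hzmem i))
  -- compute G (k+1) ξ
  have hpdeg : p.natDegree < k + 1 := by
    by_cases hp0 : p = 0
    · rw [hp0]; simp
    · rw [← hcard]
      exact (Polynomial.natDegree_lt_iff_degree_lt hp0).2 (Lagrange.degree_interpolate_lt y hvs)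
  have hpder : Polynomial.derivative^[k+1] p = 0 := Polynomial.iterate_derivative_eq_zero hpdeg
  have hnoddeg : nod.natDegree = k + 1 := by rw [hnod, Lagrange.natDegree_nodal, hcard]
  have hnodder : Polynomial.derivative^[k+1] nod = Polynomial.C (((k+1).factorial : ℝ)) := by
    rw [iter_deriv_eq_C nod (k+1) hnoddeg.le]
    congr 1
    have : nod.coeff (k+1) = 1 := by
      have := (Lagrange.nodal_monic (s := s) (v := v))
      rw [Polynomial.Monic, Polynomial.leadingCoeff, hnoddeg] at this
      exact this
    rw [this, mul_one]
  have hcval : F (k+1) ξ = c * ((k+1).factorial : ℝ) := by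
    have := hξ
    simp only [hG, hpder, hnodder, Polynomial.eval_zero, Polynomial.eval_C] at this
    linarith
  have hcbound : |c| ≤ M / (k+1).factorial := by
    have h1 : |F (k+1) ξ| ≤ M := hM ξ hξI
    rw [hcval, abs_mul, abs_of_nonneg (by positivity : (0:ℝ) ≤ ((k+1).factorial : ℝ))] at h1
    rw [div_eq_mul_inv]
    have hfac : (0:ℝ) < ((k+1).factorial : ℝ) := by positivity
    calc |c| = |c| * ((k+1).factorial : ℝ) * ((k+1).factorial : ℝ)⁻¹ := by
          field_simp
      _ ≤ M * ((k+1).factorial : ℝ)⁻¹ := by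
          apply mul_le_mul_of_nonneg_right h1 (by positivity)
  have heq : F 0 t - p.eval t = c * ∏ i ∈ s, (t - v i) := by
    rw [hc]; field_simp
  rw [heq, abs_mul, Finset.abs_prod]
  exact mul_le_mul_of_nonneg_right hcbound (Finset.prod_nonneg fun i _ => abs_nonneg _)
section TauFacts
variable {n r j i : ℕ}

lemma tau_strictMono (hn : 1 ≤ n) (hr : 1 ≤ r) (j : ℕ) : StrictMono (tau n r j) := by
  intro a b hab
  unfold tau
  have hpos : (0:ℝ) < 2 * r * n := by positivity
  have h1 : (a:ℝ) < (b:ℝ) := by exact_mod_cast hab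
  have : (a:ℝ) / (2*r*n) < (b:ℝ) / (2*r*n) := by gcongr
  linarith

lemma tau_injOn (hn : 1 ≤ n) (hr : 1 ≤ r) (j : ℕ) :
    Set.InjOn (tau n r j) (Finset.range (2*r+1)) :=
  ((tau_strictMono hn hr j).injective).injOn

lemma tau_mem (hn : 1 ≤ n) (hr : 1 ≤ r) (hi : i ≤ 2*r) :
    tau n r j i ∈ Icc (((j:ℝ)-1)/n) ((j:ℝ)/n) := by
  have hn' : (0:ℝ) < n := by exact_mod_cast hn
  have hr' : (0:ℝ) < r := by exact_mod_cast hr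
  unfold tau
  constructor
  · have : (0:ℝ) ≤ (i:ℝ)/(2*r*n) := by positivity
    linarith
  · have h1 : (i:ℝ)/(2*r*n) ≤ (2*r:ℝ)/(2*r*n) := by
      gcongr
      exact_mod_cast hi
    have h2 : (2*r:ℝ)/(2*r*n) = 1/n := by field_simp
    have h3 : ((j:ℝ)-1)/n + 1/n = (j:ℝ)/n := by field_simp; ring
    calc ((j:ℝ)-1)/n + (i:ℝ)/(2*r*n) ≤ ((j:ℝ)-1)/n + 1/n := by rw [← h2]; linarith
      _ = (j:ℝ)/n := h3

lemma piece_subset (hn : 1 ≤ n) (hj1 : 1 ≤ j) (hjn : j ≤ n) :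
    Icc (((j:ℝ)-1)/n) ((j:ℝ)/n) ⊆ Icc (0:ℝ) 1 := by
  have hn' : (0:ℝ) < n := by exact_mod_cast hn
  apply Icc_subset_Icc
  · apply div_nonneg _ hn'.le
    have : (1:ℝ) ≤ (j:ℝ) := by exact_mod_cast hj1
    linarith
  · rw [div_le_one hn']
    exact_mod_cast hjn

lemma Qn_piece (hn : 1 ≤ n) (hr : 1 ≤ r) (hj1 : 1 ≤ j) (hjn : j ≤ n) (f : ℝ → ℝ)
    {t : ℝ} (ht : t ∈ Icc (((j:ℝ)-1)/n) ((j:ℝ)/n)) :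
    Qn n r f t = (interpPoly n r j f).eval t := by
  have hn' : (0:ℝ) < n := by exact_mod_cast hn
  have hj1' : (1:ℝ) ≤ (j:ℝ) := by exact_mod_cast hj1
  have htn0 : (0:ℝ) ≤ t * n := by
    have h0 : (0:ℝ) ≤ ((j:ℝ)-1)/n := div_nonneg (by linarith) hn'.le
    have : (0:ℝ) ≤ t := le_trans h0 ht.1
    positivity
  rcases lt_or_eq_of_le ht.2 with hlt | heq
  · -- t < j/n : floor is j - 1
    have hfl : ⌊t * (n:ℝ)⌋₊ = j - 1 := by
      rw [Nat.floor_eq_iff htn0]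
      have hc : ((j-1 : ℕ):ℝ) = (j:ℝ) - 1 := by
        push_cast [hj1]; ring
      constructor
      · rw [hc]
        have := ht.1
        rw [div_le_iff₀ hn'] at this
        linarith
      · rw [hc]
        have : t * n < j := by
          rw [lt_div_iff₀ hn'] at hlt
          linarith
        linarith
    have hj : min n (⌊t * (n:ℝ)⌋₊ + 1) = j := by
      rw [hfl]
      have : j - 1 + 1 = j := by omega
      rw [this, min_eq_right hjn]
    unfold Qn
    rw [hj]
  · -- t = j/n
    have htn : t * n = (j:ℝ) := by
      rw [heq]; field_simp
    have hfl : ⌊t * (n:ℝ)⌋₊ = j := by rw [htn, Nat.floor_natCast]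
    unfold Qn
    rw [hfl]
    rcases eq_or_lt_of_le hjn with hjeq | hjlt
    · rw [← hjeq, min_eq_left (by omega)]
    · rw [min_eq_right (by omega : j + 1 ≤ n)]
      -- both pieces take value f (j/n) at t = j/n
      have hnode1 : tau n r (j+1) 0 = t := by
        unfold tau; rw [heq]; push_cast; ring
      have hnode2 : tau n r j (2*r) = t := by
        unfold tau; rw [heq]
        have hr' : (0:ℝ) < r := by exact_mod_cast hr
        field_simp; push_cast; ring
      have e1 : (interpPoly n r (j+1) f).eval t = f t := by
        conv_lhs => rw [← hnode1]
        unfold interpPoly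
        rw [Lagrange.eval_interpolate_at_node _ (tau_injOn hn hr (j+1))
          (Finset.mem_range.2 (by omega))]
        rw [hnode1]
      have e2 : (interpPoly n r j f).eval t = f t := by
        conv_lhs => rw [← hnode2]
        unfold interpPoly
        rw [Lagrange.eval_interpolate_at_node _ (tau_injOn hn hr j)
          (Finset.mem_range.2 (by omega))]
        rw [hnode2]
      rw [e1, e2]

lemma idx_spec (hn : 1 ≤ n) {t : ℝ} (ht : t ∈ Icc (0:ℝ) 1) {j : ℕ}
    (hj : j = min n (⌊t * (n:ℝ)⌋₊ + 1)) :
    1 ≤ j ∧ j ≤ n ∧ t ∈ Icc (((j:ℝ)-1)/n) ((j:ℝ)/n) := by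
  have hn' : (0:ℝ) < n := by exact_mod_cast hn
  have htn0 : (0:ℝ) ≤ t * n := by
    have := ht.1; positivity
  set N := ⌊t * (n:ℝ)⌋₊ with hN
  subst hj
  refine ⟨le_min hn (by omega), min_le_left _ _, ?_, ?_⟩
  · -- lower bound
    have h1 : min n (N+1) ≤ N + 1 := min_le_right _ _
    have h2 : ((min n (N+1) : ℕ):ℝ) ≤ (N:ℝ) + 1 := by exact_mod_cast h1
    have h3 : (N:ℝ) ≤ t * n := Nat.floor_le htn0
    rw [div_le_iff₀ hn']
    linarith
  · -- upper bound
    rcases le_or_gt (N+1) n with hle | hlt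
    · rw [min_eq_right hle]
      have h4 : t * n < (N:ℝ) + 1 := Nat.lt_floor_add_one _
      rw [le_div_iff₀ hn']
      push_cast
      linarith
    · rw [min_eq_left (by omega : n ≤ N + 1)]
      rw [le_div_iff₀ hn']
      have := ht.2
      nlinarith

end TauFacts

/-- Pointwise interpolation error for the projection Qn. -/
lemma lemE (n r : ℕ) (hn : 1 ≤ n) (hr : 1 ≤ r) (f : ℝ → ℝ) (F : ℕ → ℝ → ℝ)
    (hF0 : ∀ u ∈ Icc (0:ℝ) 1, F 0 u = f u)
    (hC : ∀ i ≤ 2*r, ContinuousOn (F i) (Icc 0 1))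
    (hD : ∀ i ≤ 2*r, ∀ x ∈ Ioo (0:ℝ) 1, HasDerivAt (F i) (F (i+1) x) x)
    (M : ℝ) (hM : ∀ u ∈ Icc (0:ℝ) 1, |F (2*r+1) u| ≤ M)
    {t : ℝ} (ht : t ∈ Icc (0:ℝ) 1) :
    |f t - Qn n r f t| ≤ M / ((2*r+1).factorial : ℝ) * ((1:ℝ)/n)^(2*r+1) := by
  have hM0 : 0 ≤ M := le_trans (abs_nonneg _) (hM t ht)
  set j := min n (⌊t * (n:ℝ)⌋₊ + 1) with hjdef
  obtain ⟨hj1, hjn, htj⟩ := idx_spec hn ht hjdef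
  have hsub := piece_subset hn hj1 hjn
  have hQ : Qn n r f t = (interpPoly n r j f).eval t := Qn_piece hn hr hj1 hjn f htj
  have herr := interp_err (2*r) F hC hD M hM (Finset.range (2*r+1)) (tau n r j)
    (tau_injOn hn hr j) (Finset.card_range _)
    (fun i hi => hsub (tau_mem hn hr (by simpa using Nat.lt_succ_iff.mp (Finset.mem_range.1 hi))))
    (fun i => f (tau n r j i))
    (fun i hi => (hF0 _ (hsub (tau_mem hn hr
      (by simpa using Nat.lt_succ_iff.mp (Finset.mem_range.1 hi))))).symm) t ht
  rw [hF0 t ht] at herr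
  rw [hQ]
  refine le_trans herr ?_
  apply mul_le_mul_of_nonneg_left _ (by positivity)
  calc ∏ i ∈ Finset.range (2*r+1), |t - tau n r j i|
      ≤ ∏ i ∈ Finset.range (2*r+1), (1:ℝ)/n := by
        apply Finset.prod_le_prod (fun i _ => abs_nonneg _)
        intro i hi
        have hτ := tau_mem (n := n) (r := r) (j := j) hn hr
          (Nat.lt_succ_iff.mp (Finset.mem_range.1 hi))
        have := abs_sub_le_of_Icc htj hτ
        refine le_trans this ?_
        rw [div_sub_div_same]
        apply le_of_eq; congr 1; ring
    _ = ((1:ℝ)/n)^(2*r+1) := by rw [Finset.prod_const, Finset.card_range]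
lemma natDeg_lt_of_deg_lt {p : Polynomial ℝ} {k : ℕ} (h : p.degree < (k : WithBot ℕ))
    (hk : 0 < k) : p.natDegree < k := by
  by_cases hp : p = 0
  · simpa [hp] using hk
  · exact (Polynomial.natDegree_lt_iff_degree_lt hp).2 h

set_option maxHeartbeats 2000000 in
lemma quad (n r : ℕ) (hn : 1 ≤ n) (hr : 1 ≤ r) (f : ℝ → ℝ) (F : ℕ → ℝ → ℝ)
    (hF0 : ∀ u ∈ Icc (0:ℝ) 1, F 0 u = f u)
    (hfc : ContinuousOn f (Icc 0 1))
    (hC : ∀ i ≤ 2*r+1, ContinuousOn (F i) (Icc 0 1))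
    (hD : ∀ i ≤ 2*r+1, ∀ x ∈ Ioo (0:ℝ) 1, HasDerivAt (F i) (F (i+1) x) x)
    (M1 M2 : ℝ)
    (hM1 : ∀ u ∈ Icc (0:ℝ) 1, |F (2*r+1) u| ≤ M1)
    (hM2 : ∀ u ∈ Icc (0:ℝ) 1, |F (2*r+2) u| ≤ M2)
    (g : ℝ → ℝ) (hgc : ContinuousOn g (Icc 0 1)) (Bg Lg : ℝ) (hLg : 0 ≤ Lg)
    (hBg : ∀ u ∈ Icc (0:ℝ) 1, |g u| ≤ Bg)
    (hgl : ∀ u ∈ Icc (0:ℝ) 1, ∀ u' ∈ Icc (0:ℝ) 1, |g u - g u'| ≤ Lg * |u - u'|)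
    {j : ℕ} (hj1 : 1 ≤ j) (hjn : j ≤ n) :
    |∫ t in (((j:ℝ)-1)/n)..((j:ℝ)/n), g t * (f t - (interpPoly n r j f).eval t)| ≤
      (Bg * M2 / ((2*r+2).factorial : ℝ) + Lg * M1 / ((2*r+1).factorial : ℝ)) *
        ((1:ℝ)/n)^(2*r+3) := by
  have hn' : (0:ℝ) < n := by exact_mod_cast hn
  have hr' : (0:ℝ) < r := by exact_mod_cast hr
  have hj1' : (1:ℝ) ≤ (j:ℝ) := by exact_mod_cast hj1
  set a : ℝ := ((j:ℝ)-1)/n with ha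
  set b : ℝ := (j:ℝ)/n with hb
  have hba : b - a = 1/n := by rw [ha, hb, div_sub_div_same]; norm_num
  have hab : a ≤ b := by rw [ha, hb]; gcongr; linarith
  have hsub : Icc a b ⊆ Icc (0:ℝ) 1 := piece_subset hn hj1 hjn
  have hτmem : ∀ i ∈ Finset.range (2*r+1), tau n r j i ∈ Icc a b := fun i hi =>
    tau_mem hn hr (Nat.lt_succ_iff.mp (Finset.mem_range.1 hi))
  set P := interpPoly n r j f with hP
  have hPnode : ∀ i ∈ Finset.range (2*r+1), P.eval (tau n r j i) = f (tau n r j i) :=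
    fun i hi => Lagrange.eval_interpolate_at_node _ (tau_injOn hn hr j) hi
  have hΦzero : ∀ u : ℝ, Phi n r j u = 0 → ∃ i ∈ Finset.range (2*r+1), u = tau n r j i := by
    intro u hu
    unfold Phi at hu
    obtain ⟨i, hi, h⟩ := Finset.prod_eq_zero_iff.1 hu
    exact ⟨i, hi, by linarith [sub_eq_zero.1 h]⟩
  set d : ℝ → ℝ := fun u => (f u - P.eval u) / Phi n r j u with hd
  set w : ℝ → ℝ := fun u => g u * (f u - P.eval u) / Phi n r j u with hw
  have hwd : ∀ u, w u = g u * d u := fun u => mul_div_assoc _ _ _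
  have hident : ∀ u : ℝ, g u * (f u - P.eval u) = Phi n r j u * w u := by
    intro u
    by_cases hu : Phi n r j u = 0
    · obtain ⟨i, hi, rfl⟩ := hΦzero u hu
      rw [hPnode i hi, hu]
      ring
    · rw [hw]; field_simp
  have hM10 : 0 ≤ M1 := le_trans (abs_nonneg _) (hM1 0 (by norm_num))
  have hM20 : 0 ≤ M2 := le_trans (abs_nonneg _) (hM2 0 (by norm_num))
  have hBg0 : 0 ≤ Bg := le_trans (abs_nonneg _) (hBg 0 (by norm_num))
  -- bound for |d|
  have hdbd : ∀ u ∈ Icc a b, Phi n r j u ≠ 0 → |d u| ≤ M1 / ((2*r+1).factorial : ℝ) := by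
    intro u hu hΦu
    have herr := interp_err (2*r) F (fun i hi => hC i (by omega)) (fun i hi => hD i (by omega))
      M1 hM1 (Finset.range (2*r+1)) (tau n r j) (tau_injOn hn hr j) (Finset.card_range _)
      (fun i hi => hsub (hτmem i hi)) (fun i => f (tau n r j i))
      (fun i hi => (hF0 _ (hsub (hτmem i hi))).symm) u (hsub hu)
    rw [hF0 u (hsub hu)] at herr
    have hprod : ∏ i ∈ Finset.range (2*r+1), |u - tau n r j i| = |Phi n r j u| := by
      rw [← Finset.abs_prod]; rfl
    rw [hprod] at herr
    rw [hd]
    rw [abs_div, div_le_iff₀ (abs_pos.2 hΦu)]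
    exact herr
  -- Lipschitz-type bound for d between two non-nodes
  have hddbd : ∀ u ∈ Icc a b, Phi n r j u ≠ 0 → ∀ u' ∈ Icc a b, Phi n r j u' ≠ 0 →
      |d u - d u'| ≤ M2 / ((2*r+2).factorial : ℝ) * |u - u'| := by
    intro u hu hΦu u' hu' hΦu'
    have hu'node : ∀ i ∈ Finset.range (2*r+1), u' ≠ tau n r j i := by
      intro i hi h
      apply hΦu'
      unfold Phi
      exact Finset.prod_eq_zero hi (by rw [h, sub_self])
    set v' : ℕ → ℝ := fun i => if i = 2*r+1 then u' else tau n r j i with hv'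
    have hv'inj : Set.InjOn v' (Finset.range (2*r+2)) := by
      intro i hi i' hi' h
      simp only [Finset.coe_range, Set.mem_Iio] at hi hi'
      simp only [hv'] at h
      by_cases h1 : i = 2*r+1 <;> by_cases h2 : i' = 2*r+1
      · omega
      · rw [if_pos h1, if_neg h2] at h
        exact absurd h (hu'node i' (Finset.mem_range.2 (by omega)))
      · rw [if_neg h1, if_pos h2] at h
        exact absurd h.symm (hu'node i (Finset.mem_range.2 (by omega)))
      · rw [if_neg h1, if_neg h2] at h
        exact tau_injOn hn hr j (by simp only [Finset.coe_range, Set.mem_Iio]; omega)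
          (by simp only [Finset.coe_range, Set.mem_Iio]; omega) h
    have hv'mem : ∀ i ∈ Finset.range (2*r+2), v' i ∈ Icc (0:ℝ) 1 := by
      intro i hi
      simp only [hv']
      by_cases h1 : i = 2*r+1
      · rw [if_pos h1]; exact hsub hu'
      · rw [if_neg h1]
        exact hsub (tau_mem hn hr (by simp only [Finset.mem_range] at hi; omega))
    set P' := Lagrange.interpolate (Finset.range (2*r+2)) v' (fun i => f (v' i)) with hP'
    have h22 : 2*r+1+1 = 2*r+2 := by omega
    have herr2 := interp_err (2*r+1) F hC hD M2 (fun x hx => by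
        rw [h22]; exact hM2 x hx)
      (Finset.range (2*r+2)) v' hv'inj (Finset.card_range _) hv'mem
      (fun i => f (v' i)) (fun i hi => (hF0 _ (hv'mem i hi)).symm) u (hsub hu)
    rw [hF0 u (hsub hu)] at herr2
    have hprodsplit : ∏ i ∈ Finset.range (2*r+2), |u - v' i| = |Phi n r j u| * |u - u'| := by
      rw [Finset.prod_range_succ]
      congr 1
      · rw [← Finset.abs_prod]
        unfold Phi
        congr 1
        apply Finset.prod_congr rfl
        intro i hi
        simp only [hv']
        simp only [Finset.mem_range] at hi
        rw [if_neg (by omega)]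
      · simp only [hv', if_pos rfl]
    rw [hprodsplit] at herr2
    -- polynomial identity  P' = P + C (d u') * nodal
    set nod := Lagrange.nodal (Finset.range (2*r+1)) (tau n r j) with hnod
    have hnodeval : ∀ x : ℝ, nod.eval x = Phi n r j x := fun x => Lagrange.eval_nodal
    set q := P' - P - Polynomial.C (d u') * nod with hq
    have hqdeg : q.natDegree < 2*r+2 := by
      have n1 : P'.natDegree < 2*r+2 := by
        apply natDeg_lt_of_deg_lt _ (by omega)
        have := Lagrange.degree_interpolate_lt (fun i => f (v' i)) hv'inj
        rw [Finset.card_range] at this; exact this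
      have n2 : P.natDegree < 2*r+1 := by
        apply natDeg_lt_of_deg_lt _ (by omega)
        have := Lagrange.degree_interpolate_lt (fun i => f (tau n r j i)) (tau_injOn hn hr j)
        simpa [hP, interpPoly] using this
      have n3 : (Polynomial.C (d u') * nod).natDegree ≤ 2*r+1 := by
        refine le_trans (Polynomial.natDegree_C_mul_le _ _) ?_
        rw [hnod, Lagrange.natDegree_nodal, Finset.card_range]
      have h4 := Polynomial.natDegree_sub_le (P' - P) (Polynomial.C (d u') * nod)
      have h5 := Polynomial.natDegree_sub_le P' P
      rw [hq]
      omega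
    set S : Finset ℝ := insert u' ((Finset.range (2*r+1)).image (tau n r j)) with hS
    have hu'nm : u' ∉ (Finset.range (2*r+1)).image (tau n r j) := by
      intro hmem
      obtain ⟨i, hi, h⟩ := Finset.mem_image.1 hmem
      exact hu'node i hi h.symm
    have hScard : S.card = 2*r+2 := by
      rw [hS, Finset.card_insert_of_notMem hu'nm,
        Finset.card_image_of_injOn (tau_injOn hn hr j), Finset.card_range]
    have hqzero : ∀ y ∈ S, q.eval y = 0 := by
      intro y hy
      rw [hS, Finset.mem_insert] at hy
      rcases hy with rfl | hy
      · have e1 : P'.eval y = f y := by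
          have := Lagrange.eval_interpolate_at_node (fun i => f (v' i)) hv'inj
            (Finset.mem_range.2 (by omega : 2*r+1 < 2*r+2))
          rw [hP']
          simpa [hv'] using this
        simp only [hq, Polynomial.eval_sub, Polynomial.eval_mul, Polynomial.eval_C, e1,
          hnodeval]
        rw [hd]
        field_simp
        ring
      · obtain ⟨i, hi, rfl⟩ := Finset.mem_image.1 hy
        have e1 : P'.eval (tau n r j i) = f (tau n r j i) := by
          have hmem : i ∈ Finset.range (2*r+2) := by simp at hi ⊢; omega
          have := Lagrange.eval_interpolate_at_node (fun i => f (v' i)) hv'inj hmem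
          have hne : i ≠ 2*r+1 := by simp at hi; omega
          rw [hP']
          simpa [hv', if_neg hne] using this
        simp only [hq, Polynomial.eval_sub, Polynomial.eval_mul, Polynomial.eval_C, e1,
          hPnode i hi, hnod, Lagrange.eval_nodal_at_node hi]
        ring
    have hq0 : q = 0 := by
      apply Polynomial.eq_zero_of_natDegree_lt_card_of_eval_eq_zero' q S hqzero
      rw [hScard]; exact hqdeg
    have hP'eval : P'.eval u = P.eval u + d u' * Phi n r j u := by
      have h0 : P' - P - Polynomial.C (d u') * nod = 0 := by rw [← hq]; exact hq0
      have : P' = P + Polynomial.C (d u') * nod := by linear_combination h0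
      rw [this]
      rw [Polynomial.eval_add, Polynomial.eval_mul, Polynomial.eval_C, hnodeval]
    -- conclude
    have hkey : d u - d u' = (f u - P'.eval u) / Phi n r j u := by
      have hdu : d u * Phi n r j u = f u - P.eval u := by rw [hd]; field_simp
      rw [hP'eval, eq_div_iff hΦu]
      linear_combination hdu
    rw [hkey, abs_div, div_le_iff₀ (abs_pos.2 hΦu)]
    calc |f u - P'.eval u| ≤ M2 / ((2*r+2).factorial : ℝ) * (|Phi n r j u| * |u - u'|) := by
          rw [← h22]; exact herr2
      _ = M2 / ((2*r+2).factorial : ℝ) * |u - u'| * |Phi n r j u| := by ring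
  -- the reference point t₀
  set t₀ : ℝ := a + 1/(4*r*n) with ht₀
  have ht₀mem : t₀ ∈ Icc a b := by
    constructor
    · rw [ht₀]; have : (0:ℝ) ≤ 1/(4*r*n) := by positivity
      linarith
    · rw [ht₀]
      have hr1 : (1:ℝ) ≤ r := by exact_mod_cast hr
      have h1 : (1:ℝ)/(4*r*n) ≤ 1/n := by
        rw [div_le_div_iff₀ (by positivity) hn']
        nlinarith
      linarith [hba]
  have ht₀ne : Phi n r j t₀ ≠ 0 := by
    unfold Phi
    rw [Finset.prod_ne_zero_iff]
    intro i hi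
    rw [ht₀]
    unfold tau
    rw [ha]
    intro h
    have h2 : (1:ℝ)/(4*r*n) = (i:ℝ)/(2*r*n) := by linarith
    rw [div_eq_div_iff (by positivity) (by positivity)] at h2
    rcases Nat.eq_zero_or_pos i with h0 | hp
    · rw [h0] at h2; norm_num at h2
      rcases h2 with h2 | h2 <;> omega
    · have hi1 : (1:ℝ) ≤ (i:ℝ) := by exact_mod_cast hp
      nlinarith [mul_pos hr' hn']
  set K := w t₀ with hK
  set Lw := Bg * M2 / ((2*r+2).factorial : ℝ) + Lg * M1 / ((2*r+1).factorial : ℝ) with hLw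
  have hLw0 : 0 ≤ Lw := by rw [hLw]; positivity
  have hwbd : ∀ u ∈ Icc a b, Phi n r j u ≠ 0 → |w u - K| ≤ Lw * (1/n) := by
    intro u hu hΦu
    rw [hK, hwd, hwd]
    have huu : |u - t₀| ≤ 1/n := by
      have := abs_sub_le_of_Icc hu ht₀mem
      linarith [hba]
    have e1 : g u * d u - g t₀ * d t₀ = g u * (d u - d t₀) + (g u - g t₀) * d t₀ := by ring
    rw [e1]
    refine le_trans (abs_add_le _ _) ?_
    rw [abs_mul, abs_mul]
    have b1 : |g u| * |d u - d t₀| ≤ Bg * (M2 / ((2*r+2).factorial : ℝ) * (1/n)) := by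
      apply mul_le_mul (hBg u (hsub hu)) _ (abs_nonneg _) hBg0
      refine le_trans (hddbd u hu hΦu t₀ ht₀mem ht₀ne) ?_
      exact mul_le_mul_of_nonneg_left huu (by positivity)
    have b2 : |g u - g t₀| * |d t₀| ≤ Lg * (1/n) * (M1 / ((2*r+1).factorial : ℝ)) := by
      apply mul_le_mul _ (hdbd t₀ ht₀mem ht₀ne) (abs_nonneg _) (mul_nonneg hLg (by positivity))
      refine le_trans (hgl u (hsub hu) t₀ (hsub ht₀mem)) ?_
      exact mul_le_mul_of_nonneg_left huu hLg
    refine le_trans (add_le_add b1 b2) (le_of_eq ?_)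
    rw [hLw]; ring
  have hΦbd : ∀ u ∈ Icc a b, |Phi n r j u| ≤ ((1:ℝ)/n)^(2*r+1) := by
    intro u hu
    unfold Phi
    rw [Finset.abs_prod]
    calc ∏ i ∈ Finset.range (2*r+1), |u - tau n r j i|
        ≤ ∏ _i ∈ Finset.range (2*r+1), (1:ℝ)/n := by
          apply Finset.prod_le_prod (fun i _ => abs_nonneg _)
          intro i hi
          have := abs_sub_le_of_Icc hu (hτmem i hi)
          linarith [hba]
      _ = ((1:ℝ)/n)^(2*r+1) := by rw [Finset.prod_const, Finset.card_range]
  -- pointwise bound for the recentered integrand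
  have hbound : ∀ u ∈ Set.uIoc a b,
      |g u * (f u - P.eval u) - K * Phi n r j u| ≤ ((1:ℝ)/n)^(2*r+1) * (Lw * (1/n)) := by
    intro u hu
    have hu' : u ∈ Icc a b := by
      rw [uIoc_of_le hab] at hu
      exact Ioc_subset_Icc_self hu
    rw [hident u]
    have e1 : Phi n r j u * w u - K * Phi n r j u = Phi n r j u * (w u - K) := by ring
    rw [e1, abs_mul]
    by_cases hΦu : Phi n r j u = 0
    · rw [hΦu, abs_zero, zero_mul]
      positivity
    · exact mul_le_mul (hΦbd u hu') (hwbd u hu' hΦu) (abs_nonneg _) (by positivity)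
  -- ∫ Phi = 0 by symmetry
  have hΦrefl : ∀ u : ℝ, Phi n r j (a + b - u) = - Phi n r j u := by
    intro u
    have hτsym : ∀ i ∈ Finset.range (2*r+1), a + b - tau n r j i = tau n r j (2*r - i) := by
      intro i hi
      simp only [Finset.mem_range] at hi
      have hile : i ≤ 2*r := by omega
      unfold tau
      rw [ha, hb, Nat.cast_sub hile]
      push_cast
      field_simp
      ring
    unfold Phi
    have e1 : ∀ i ∈ Finset.range (2*r+1), (a + b - u) - tau n r j i =
        tau n r j (2*r - i) - u := by
      intro i hi
      rw [← hτsym i hi]; ring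
    rw [Finset.prod_congr rfl e1]
    have e2 : ∏ i ∈ Finset.range (2*r+1), (tau n r j (2*r - i) - u) =
        ∏ i ∈ Finset.range (2*r+1), (tau n r j i - u) := by
      have := Finset.prod_range_reflect (fun i => tau n r j i - u) (2*r+1)
      simpa using this
    rw [e2]
    have e3 : ∀ i ∈ Finset.range (2*r+1), tau n r j i - u = (-1) * (u - tau n r j i) := by
      intro i _; ring
    rw [Finset.prod_congr rfl e3, Finset.prod_mul_distrib, Finset.prod_const,
      Finset.card_range]
    have : (-1:ℝ)^(2*r+1) = -1 := Odd.neg_one_pow ⟨r, by ring⟩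
    rw [this]
    ring
  have hΦcont : Continuous (Phi n r j) := by
    unfold Phi
    exact continuous_finset_prod _ (fun i _ => continuous_id.sub continuous_const)
  have hΦint : (∫ t in a..b, Phi n r j t) = 0 := by
    have h1 := intervalIntegral.integral_comp_sub_left (a := a) (b := b) (Phi n r j) (a + b)
    have e1 : a + b - b = a := by ring
    have e2 : a + b - a = b := by ring
    rw [e1, e2] at h1
    have h2 : (∫ x in a..b, Phi n r j (a + b - x)) = ∫ x in a..b, - Phi n r j x := by
      apply intervalIntegral.integral_congr
      intro x _
      exact hΦrefl x
    rw [h2, intervalIntegral.integral_neg] at h1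
    linarith
  -- put everything together
  have hfPc : ContinuousOn (fun t => g t * (f t - P.eval t)) (Icc a b) :=
    (hgc.mono hsub).mul ((hfc.mono hsub).sub (Polynomial.continuous _).continuousOn)
  have hint1 : IntervalIntegrable (fun t => g t * (f t - P.eval t) - K * Phi n r j t)
      volume a b := by
    apply ContinuousOn.intervalIntegrable
    rw [uIcc_of_le hab]
    exact hfPc.sub (continuous_const.mul hΦcont).continuousOn
  have hint2 : IntervalIntegrable (fun t => K * Phi n r j t) volume a b :=
    ((continuous_const.mul hΦcont)).intervalIntegrable _ _
  have hsplit : (∫ t in a..b, g t * (f t - P.eval t)) =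
      ∫ t in a..b, (g t * (f t - P.eval t) - K * Phi n r j t) := by
    have e : (∫ t in a..b, g t * (f t - P.eval t)) =
        ∫ t in a..b, ((g t * (f t - P.eval t) - K * Phi n r j t) + K * Phi n r j t) := by
      apply intervalIntegral.integral_congr
      intro x _; ring
    rw [e, intervalIntegral.integral_add hint1 hint2, intervalIntegral.integral_const_mul,
      hΦint, mul_zero, add_zero]
  rw [hsplit]
  have := intervalIntegral.norm_integral_le_of_norm_le_const
    (C := ((1:ℝ)/n)^(2*r+1) * (Lw * (1/n)))
    (f := fun t => g t * (f t - P.eval t) - K * Phi n r j t) (a := a) (b := b)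
    (by intro x hx; rw [Real.norm_eq_abs]; exact hbound x hx)
  rw [Real.norm_eq_abs] at this
  refine le_trans this ?_
  have habs : |b - a| = 1/n := by rw [hba]; exact abs_of_nonneg (by positivity)
  rw [habs]
  have : ((1:ℝ)/n)^(2*r+1) * (Lw * (1/n)) * (1/n) = Lw * ((1/n)^(2*r+1) * (1/n) * (1/n)) := by
    ring
  rw [this]
  have h23 : ((1:ℝ)/n)^(2*r+1) * (1/n) * (1/n) = ((1:ℝ)/n)^(2*r+3) := by
    rw [show 2*r+3 = (2*r+1)+1+1 by omega, pow_succ, pow_succ]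
    ring
  rw [h23]
section Param
variable {r : ℕ} {κd : ℕ → ℕ → ℝ → ℝ → ℝ} {C₂ : ℝ}

/-- Integrability of the parametrized integrand. -/
lemma paramInt (hC₂ : 0 < C₂)
    (hdt : ∀ α β : ℕ, α + β + 1 ≤ 2*r+3 → ∀ s ∈ Icc (0:ℝ) 1, ∀ t ∈ Icc (0:ℝ) 1,
      HasDerivWithinAt (fun u => κd α β s u) (κd α (β+1) s t) (Icc 0 1) t)
    (hbd : ∀ α β : ℕ, α + β ≤ 2*r+3 →
      ∀ s ∈ Icc (0:ℝ) 1, ∀ t ∈ Icc (0:ℝ) 1, |κd α β s t| ≤ C₂)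
    (α : ℕ) (hα : α + 1 ≤ 2*r+3)
    {a b : ℝ} (hab : a ≤ b) (hsub : Icc a b ⊆ Icc (0:ℝ) 1)
    {ϕ : ℝ → ℝ} (hϕm : AEStronglyMeasurable ϕ (volume.restrict (Ioc a b)))
    {Bϕ : ℝ} (hϕb : ∀ t ∈ Ioc a b, |ϕ t| ≤ Bϕ)
    {u : ℝ} (hu : u ∈ Icc (0:ℝ) 1) :
    IntervalIntegrable (fun t => κd α 0 u t * ϕ t) volume a b := by
  rw [intervalIntegrable_iff_integrableOn_Ioc_of_le hab]
  have hcont : ContinuousOn (fun t => κd α 0 u t) (Icc (0:ℝ) 1) := fun t ht =>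
    (hdt α 0 hα u hu t ht).continuousWithinAt
  have hmeas : AEStronglyMeasurable (fun t => κd α 0 u t * ϕ t)
      (volume.restrict (Ioc a b)) := by
    apply AEStronglyMeasurable.mul _ hϕm
    exact (hcont.mono fun t ht => hsub (Ioc_subset_Icc_self ht)).aestronglyMeasurable
      measurableSet_Ioc
  apply Integrable.mono' (integrable_const (C₂ * Bϕ)) hmeas
  filter_upwards [ae_restrict_mem measurableSet_Ioc] with t ht
  rw [Real.norm_eq_abs, abs_mul]
  exact mul_le_mul (hbd α 0 (by omega) u hu t (hsub (Ioc_subset_Icc_self ht)))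
    (hϕb t ht) (abs_nonneg _) hC₂.le

/-- Simple bound for the parametrized integral. -/
lemma paramBound (hC₂ : 0 < C₂)
    (hbd : ∀ α β : ℕ, α + β ≤ 2*r+3 →
      ∀ s ∈ Icc (0:ℝ) 1, ∀ t ∈ Icc (0:ℝ) 1, |κd α β s t| ≤ C₂)
    (α : ℕ) (hα : α ≤ 2*r+3)
    {a b : ℝ} (hab : a ≤ b) (hsub : Icc a b ⊆ Icc (0:ℝ) 1)
    {ϕ : ℝ → ℝ} {Bϕ : ℝ} (hϕb : ∀ t ∈ Ioc a b, |ϕ t| ≤ Bϕ)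
    {u : ℝ} (hu : u ∈ Icc (0:ℝ) 1) :
    |∫ t in a..b, κd α 0 u t * ϕ t| ≤ C₂ * Bϕ * (b - a) := by
  have h := intervalIntegral.norm_integral_le_of_norm_le_const
    (C := C₂ * Bϕ) (f := fun t => κd α 0 u t * ϕ t) (a := a) (b := b) (by
      intro t ht
      rw [uIoc_of_le hab] at ht
      rw [Real.norm_eq_abs, abs_mul]
      exact mul_le_mul (hbd α 0 (by omega) u hu t (hsub (Ioc_subset_Icc_self ht)))
        (hϕb t ht) (abs_nonneg _) hC₂.le)
  rw [Real.norm_eq_abs, abs_of_nonneg (by linarith : (0:ℝ) ≤ b - a)] at h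
  exact h

set_option maxHeartbeats 1000000 in
/-- Differentiation under the integral sign. -/
lemma paramDeriv (hC₂ : 0 < C₂)
    (hds : ∀ α β : ℕ, α + β + 1 ≤ 2*r+3 → ∀ t ∈ Icc (0:ℝ) 1, ∀ s ∈ Icc (0:ℝ) 1,
      HasDerivWithinAt (fun u => κd α β u t) (κd (α+1) β s t) (Icc 0 1) s)
    (hdt : ∀ α β : ℕ, α + β + 1 ≤ 2*r+3 → ∀ s ∈ Icc (0:ℝ) 1, ∀ t ∈ Icc (0:ℝ) 1,
      HasDerivWithinAt (fun u => κd α β s u) (κd α (β+1) s t) (Icc 0 1) t)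
    (hbd : ∀ α β : ℕ, α + β ≤ 2*r+3 →
      ∀ s ∈ Icc (0:ℝ) 1, ∀ t ∈ Icc (0:ℝ) 1, |κd α β s t| ≤ C₂)
    (α : ℕ) (hα : α + 2 ≤ 2*r+3)
    {a b : ℝ} (hab : a ≤ b) (hsub : Icc a b ⊆ Icc (0:ℝ) 1)
    {ϕ : ℝ → ℝ} (hϕm : AEStronglyMeasurable ϕ (volume.restrict (Ioc a b)))
    {Bϕ : ℝ} (hϕb : ∀ t ∈ Ioc a b, |ϕ t| ≤ Bϕ)
    {s : ℝ} (hs : s ∈ Ioo (0:ℝ) 1) :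
    HasDerivAt (fun u => ∫ t in a..b, κd α 0 u t * ϕ t)
      (∫ t in a..b, κd (α+1) 0 s t * ϕ t) s := by
  set ε := min s (1 - s) with hε
  have hε0 : 0 < ε := lt_min hs.1 (by linarith [hs.2])
  have hball : Metric.ball s ε ⊆ Ioo (0:ℝ) 1 := by
    intro v hv
    rw [Metric.mem_ball, Real.dist_eq, abs_lt] at hv
    constructor
    · have := min_le_left s (1 - s); linarith [hv.1]
    · have := min_le_right s (1 - s); linarith [hv.2]
  have hballIcc : Metric.ball s ε ⊆ Icc (0:ℝ) 1 := hball.trans Ioo_subset_Icc_self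
  have hIoo : Set.uIoc a b = Ioc a b := uIoc_of_le hab
  have hsIcc : s ∈ Icc (0:ℝ) 1 := Ioo_subset_Icc_self hs
  have hF_meas : ∀ᶠ v in nhds s, AEStronglyMeasurable (fun t => κd α 0 v t * ϕ t)
      (volume.restrict (Set.uIoc a b)) := by
    apply Filter.eventually_of_mem (isOpen_Ioo.mem_nhds hs)
    intro v hv
    rw [hIoo]
    apply AEStronglyMeasurable.mul _ hϕm
    have hcont : ContinuousOn (fun t => κd α 0 v t) (Icc (0:ℝ) 1) := fun t ht =>
      (hdt α 0 (by omega) v (Ioo_subset_Icc_self hv) t ht).continuousWithinAt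
    exact (hcont.mono fun t ht => hsub (Ioc_subset_Icc_self ht)).aestronglyMeasurable
      measurableSet_Ioc
  have hF_int : IntervalIntegrable (fun t => κd α 0 s t * ϕ t) volume a b :=
    paramInt hC₂ hdt hbd α (by omega) hab hsub hϕm hϕb hsIcc
  have hF'_meas : AEStronglyMeasurable (fun t => κd (α+1) 0 s t * ϕ t)
      (volume.restrict (Set.uIoc a b)) := by
    rw [hIoo]
    apply AEStronglyMeasurable.mul _ hϕm
    have hcont : ContinuousOn (fun t => κd (α+1) 0 s t) (Icc (0:ℝ) 1) := fun t ht =>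
      (hdt (α+1) 0 (by omega) s hsIcc t ht).continuousWithinAt
    exact (hcont.mono fun t ht => hsub (Ioc_subset_Icc_self ht)).aestronglyMeasurable
      measurableSet_Ioc
  have h_bound : ∀ᵐ t ∂(volume : Measure ℝ), t ∈ Set.uIoc a b → ∀ v ∈ Metric.ball s ε,
      ‖κd (α+1) 0 v t * ϕ t‖ ≤ C₂ * Bϕ := by
    apply Filter.Eventually.of_forall
    intro t ht v hv
    rw [hIoo] at ht
    rw [Real.norm_eq_abs, abs_mul]
    exact mul_le_mul (hbd (α+1) 0 (by omega) v (hballIcc hv) t (hsub (Ioc_subset_Icc_self ht)))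
      (hϕb t ht) (abs_nonneg _) hC₂.le
  have h_diff : ∀ᵐ t ∂(volume : Measure ℝ), t ∈ Set.uIoc a b → ∀ v ∈ Metric.ball s ε,
      HasDerivAt (fun u => κd α 0 u t * ϕ t) (κd (α+1) 0 v t * ϕ t) v := by
    apply Filter.Eventually.of_forall
    intro t ht v hv
    rw [hIoo] at ht
    have hti : t ∈ Icc (0:ℝ) 1 := hsub (Ioc_subset_Icc_self ht)
    have hvI : v ∈ Ioo (0:ℝ) 1 := hball hv
    have := (hds α 0 (by omega) t hti v (Ioo_subset_Icc_self hvI)).hasDerivAt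
      (Icc_mem_nhds hvI.1 hvI.2)
    exact this.mul_const (ϕ t)
  exact (intervalIntegral.hasDerivAt_integral_of_dominated_loc_of_deriv_le (Metric.ball_mem_nhds s hε0) hF_meas
    hF_int hF'_meas h_bound (intervalIntegrable_const) h_diff).2

/-- Continuity in the parameter. -/
lemma paramCont (hC₂ : 0 < C₂)
    (hds : ∀ α β : ℕ, α + β + 1 ≤ 2*r+3 → ∀ t ∈ Icc (0:ℝ) 1, ∀ s ∈ Icc (0:ℝ) 1,
      HasDerivWithinAt (fun u => κd α β u t) (κd (α+1) β s t) (Icc 0 1) s)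
    (hdt : ∀ α β : ℕ, α + β + 1 ≤ 2*r+3 → ∀ s ∈ Icc (0:ℝ) 1, ∀ t ∈ Icc (0:ℝ) 1,
      HasDerivWithinAt (fun u => κd α β s u) (κd α (β+1) s t) (Icc 0 1) t)
    (hbd : ∀ α β : ℕ, α + β ≤ 2*r+3 →
      ∀ s ∈ Icc (0:ℝ) 1, ∀ t ∈ Icc (0:ℝ) 1, |κd α β s t| ≤ C₂)
    (α : ℕ) (hα : α + 1 ≤ 2*r+3)
    {a b : ℝ} (hab : a ≤ b) (hsub : Icc a b ⊆ Icc (0:ℝ) 1)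
    {ϕ : ℝ → ℝ} (hϕm : AEStronglyMeasurable ϕ (volume.restrict (Ioc a b)))
    {Bϕ : ℝ} (hϕb : ∀ t ∈ Ioc a b, |ϕ t| ≤ Bϕ) :
    ContinuousOn (fun u => ∫ t in a..b, κd α 0 u t * ϕ t) (Icc (0:ℝ) 1) := by
  have hk : ∀ t ∈ Icc (0:ℝ) 1, ∀ u ∈ Icc (0:ℝ) 1, ∀ u' ∈ Icc (0:ℝ) 1,
      |κd α 0 u t - κd α 0 u' t| ≤ C₂ * |u - u'| := by
    intro t ht u hu u' hu'
    have := (convex_Icc (0:ℝ) 1).norm_image_sub_le_of_norm_hasDerivWithin_le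
      (f := fun v => κd α 0 v t) (f' := fun v => κd (α+1) 0 v t) (C := C₂)
      (fun v hv => hds α 0 (by omega) t ht v hv)
      (fun v hv => by rw [Real.norm_eq_abs]; exact hbd (α+1) 0 (by omega) v hv t ht)
      hu' hu
    simpa [Real.norm_eq_abs] using this
  apply LipschitzOnWith.continuousOn (K := Real.toNNReal (C₂ * Bϕ * (b - a)))
  rw [lipschitzOnWith_iff_dist_le_mul]
  intro u hu u' hu'
  rw [Real.dist_eq, Real.dist_eq]
  have hsb : (∫ t in a..b, κd α 0 u t * ϕ t) - (∫ t in a..b, κd α 0 u' t * ϕ t)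
      = ∫ t in a..b, (κd α 0 u t * ϕ t - κd α 0 u' t * ϕ t) :=
    (intervalIntegral.integral_sub (paramInt hC₂ hdt hbd α hα hab hsub hϕm hϕb hu)
      (paramInt hC₂ hdt hbd α hα hab hsub hϕm hϕb hu')).symm
  rw [hsb]
  have h := intervalIntegral.norm_integral_le_of_norm_le_const
    (C := C₂ * |u - u'| * Bϕ)
    (f := fun t => κd α 0 u t * ϕ t - κd α 0 u' t * ϕ t) (a := a) (b := b) (by
      intro t ht
      rw [uIoc_of_le hab] at ht
      have hti : t ∈ Icc (0:ℝ) 1 := hsub (Ioc_subset_Icc_self ht)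
      have e1 : κd α 0 u t * ϕ t - κd α 0 u' t * ϕ t = (κd α 0 u t - κd α 0 u' t) * ϕ t := by
        ring
      show ‖κd α 0 u t * ϕ t - κd α 0 u' t * ϕ t‖ ≤ _
      rw [Real.norm_eq_abs, e1, abs_mul]
      exact mul_le_mul (hk t hti u hu u' hu') (hϕb t ht) (abs_nonneg _) (by positivity))
  rw [Real.norm_eq_abs, abs_of_nonneg (by linarith : (0:ℝ) ≤ b - a)] at h
  refine le_trans h ?_
  rw [Real.coe_toNNReal']
  have h2 : C₂ * |u - u'| * Bϕ * (b - a) = (C₂ * Bϕ * (b - a)) * |u - u'| := by ring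
  rw [h2]
  exact mul_le_mul_of_nonneg_right (le_max_left _ _) (abs_nonneg _)

end Param
lemma contOn_sum (s : Finset ℕ) (f : ℕ → ℝ → ℝ) (K : Set ℝ)
    (h : ∀ k ∈ s, ContinuousOn (f k) K) :
    ContinuousOn (fun u => ∑ k ∈ s, f k u) K := by
  classical
  induction s using Finset.induction with
  | empty => simpa using continuousOn_const
  | @insert a s ha ih =>
    simp only [Finset.sum_insert ha]
    exact (h a (Finset.mem_insert_self a s)).add
      (ih fun k hk => h k (Finset.mem_insert_of_mem hk))



/-- Lemma 5, first estimate -/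
theorem stmt_16 (r : ℕ) (hr : 1 ≤ r)
    (κ : ℝ → ℝ → ℝ) (κd : ℕ → ℕ → ℝ → ℝ → ℝ) (C₂ : ℝ) (hC₂ : 0 < C₂)
    (hκ0 : κd 0 0 = κ)
    (hds : ∀ α β : ℕ, α + β + 1 ≤ 2 * r + 3 → ∀ t ∈ Set.Icc (0:ℝ) 1, ∀ s ∈ Set.Icc (0:ℝ) 1,
      HasDerivWithinAt (fun u => κd α β u t) (κd (α + 1) β s t) (Set.Icc 0 1) s)
    (hdt : ∀ α β : ℕ, α + β + 1 ≤ 2 * r + 3 → ∀ s ∈ Set.Icc (0:ℝ) 1, ∀ t ∈ Set.Icc (0:ℝ) 1,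
      HasDerivWithinAt (fun u => κd α β s u) (κd α (β + 1) s t) (Set.Icc 0 1) t)
    (hcont : ∀ α β : ℕ, α + β ≤ 2 * r + 3 →
      ContinuousOn (fun q : ℝ × ℝ => κd α β q.1 q.2) (Set.Icc 0 1 ×ˢ Set.Icc 0 1))
    (hbd : ∀ α β : ℕ, α + β ≤ 2 * r + 3 →
      ∀ s ∈ Set.Icc (0:ℝ) 1, ∀ t ∈ Set.Icc (0:ℝ) 1, |κd α β s t| ≤ C₂)
    :
    ∃ C : ℝ, 0 < C ∧
      ∀ n : ℕ, 1 ≤ n → ∀ ψ : ℝ → ℝ, ContinuousOn ψ (Set.Icc 0 1) →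
        supNorm (fun t =>
            Kop κ (fun u => Kop κ ψ u - Qn n r (Kop κ ψ) u) t -
              Qn n r (Kop κ (fun u => Kop κ ψ u - Qn n r (Kop κ ψ) u)) t) ≤
          C * supNorm ψ * ((1 : ℝ) / n) ^ (4 * r + 3) := by
  have hfac1 : (0:ℝ) < ((2*r+1).factorial : ℝ) := by
    exact_mod_cast (2*r+1).factorial_pos
  have hfac2 : (0:ℝ) < ((2*r+2).factorial : ℝ) := by
    exact_mod_cast (2*r+2).factorial_pos
  refine ⟨C₂^2 * (1/((2*r+2).factorial:ℝ) + 1/((2*r+1).factorial:ℝ)) / ((2*r+1).factorial:ℝ),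
    by positivity, ?_⟩
  intro n hn ψ hψ
  have hn' : (0:ℝ) < n := by exact_mod_cast hn
  haveI : Nonempty (Icc (0:ℝ) 1) := ⟨⟨0, by norm_num⟩⟩
  -- sup-norm facts for ψ
  have hbdd : BddAbove (Set.range fun t : Icc (0:ℝ) 1 => |ψ t.1|) := by
    obtain ⟨c, hc⟩ := isCompact_Icc.bddAbove_image hψ.abs
    refine ⟨c, ?_⟩
    rintro y ⟨t, rfl⟩
    exact hc (Set.mem_image_of_mem _ t.2)
  have hψb : ∀ t ∈ Icc (0:ℝ) 1, |ψ t| ≤ supNorm ψ := fun t ht => le_ciSup hbdd ⟨t, ht⟩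
  set Sψ := supNorm ψ with hSψ
  have hS0 : 0 ≤ Sψ := le_trans (abs_nonneg _) (hψb 0 (by norm_num))
  have hψb' : ∀ t ∈ Ioc (0:ℝ) 1, |ψ t| ≤ Sψ := fun t ht => hψb t (Ioc_subset_Icc_self ht)
  have hψm : AEStronglyMeasurable ψ (volume.restrict (Ioc (0:ℝ) 1)) :=
    (hψ.mono Ioc_subset_Icc_self).aestronglyMeasurable measurableSet_Ioc
  have h01 : (0:ℝ) ≤ 1 := zero_le_one
  have hIccsub : Icc (0:ℝ) 1 ⊆ Icc (0:ℝ) 1 := subset_rfl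
  -- the chain for x = Kψ
  set X : ℕ → ℝ → ℝ := fun α s => ∫ t in (0:ℝ)..1, κd α 0 s t * ψ t with hX
  have hX0 : ∀ u, X 0 u = Kop κ ψ u := by
    intro u; simp only [hX]; unfold Kop; rw [hκ0]
  have hXd : ∀ α, α ≤ 2*r+1 → ∀ s ∈ Ioo (0:ℝ) 1, HasDerivAt (X α) (X (α+1) s) s :=
    fun α hα s hs => paramDeriv hC₂ hds hdt hbd α (by omega) h01 hIccsub hψm hψb' hs
  have hXc : ∀ α, α ≤ 2*r+2 → ContinuousOn (X α) (Icc (0:ℝ) 1) := fun α hα =>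
    paramCont hC₂ hds hdt hbd α (by omega) h01 hIccsub hψm hψb'
  have hXb : ∀ α, α ≤ 2*r+3 → ∀ s ∈ Icc (0:ℝ) 1, |X α s| ≤ C₂ * Sψ := by
    intro α hα s hs
    have := paramBound hC₂ hbd α hα h01 hIccsub hψb' hs
    simpa using this
  set x : ℝ → ℝ := Kop κ ψ with hx
  have hxc : ContinuousOn x (Icc (0:ℝ) 1) := by
    have h := hXc 0 (by omega)
    have hfeq : X 0 = x := funext hX0
    rwa [hfeq] at h
  have hE : ∀ t ∈ Icc (0:ℝ) 1, |x t - Qn n r x t| ≤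
      (C₂*Sψ) / ((2*r+1).factorial:ℝ) * ((1:ℝ)/n)^(2*r+1) := fun t ht =>
    lemE n r hn hr x X (fun u _ => hX0 u) (fun i hi => hXc i (by omega))
      (fun i hi => hXd i (by omega)) (C₂*Sψ) (fun u hu => hXb (2*r+1) (by omega) u hu) ht
  have hpow1 : ((1:ℝ)/n)^(2*r+1) ≤ 1 := by
    apply pow_le_one₀ (by positivity)
    rw [div_le_one hn']; exact_mod_cast hn
  have hfac_ge : (1:ℝ) ≤ ((2*r+1).factorial : ℝ) := by
    exact_mod_cast Nat.one_le_iff_ne_zero.2 (2*r+1).factorial_ne_zero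
  have hEb : ∀ t ∈ Icc (0:ℝ) 1, |x t - Qn n r x t| ≤ C₂ * Sψ := by
    intro t ht
    refine le_trans (hE t ht) ?_
    calc (C₂*Sψ)/((2*r+1).factorial:ℝ) * ((1:ℝ)/n)^(2*r+1)
        ≤ (C₂*Sψ)/((2*r+1).factorial:ℝ) * 1 :=
          mul_le_mul_of_nonneg_left hpow1 (by positivity)
      _ ≤ C₂ * Sψ := by
          rw [mul_one]
          exact div_le_self (by positivity) hfac_ge
  -- piecewise data for e = x - Qn x
  set A : ℕ → ℝ := fun k => (k:ℝ)/n with hA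
  have hend1 : ∀ k : ℕ, A k = (((k+1:ℕ):ℝ)-1)/n := by
    intro k; rw [hA]; push_cast; ring_nf
  have habk : ∀ k : ℕ, A k ≤ A (k+1) := by
    intro k; simp only [hA]
    gcongr
    exact_mod_cast k.le_succ
  have hsubk : ∀ k, k < n → Icc (A k) (A (k+1)) ⊆ Icc (0:ℝ) 1 := by
    intro k hk
    rw [hend1 k]
    exact piece_subset hn (by omega) (by omega)
  have hQnxk : ∀ k, k < n → ∀ t ∈ Icc (A k) (A (k+1)),
      Qn n r x t = (interpPoly n r (k+1) x).eval t := by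
    intro k hk t ht
    rw [hend1 k] at ht
    exact Qn_piece hn hr (by omega) (by omega) x ht
  have hpc : ∀ k, k < n → ContinuousOn (fun t => x t - (interpPoly n r (k+1) x).eval t)
      (Icc (A k) (A (k+1))) := fun k hk =>
    (hxc.mono (hsubk k hk)).sub (Polynomial.continuous _).continuousOn
  have hpm : ∀ k, k < n → AEStronglyMeasurable (fun t => x t - (interpPoly n r (k+1) x).eval t)
      (volume.restrict (Ioc (A k) (A (k+1)))) := fun k hk =>
    ((hpc k hk).mono Ioc_subset_Icc_self).aestronglyMeasurable measurableSet_Ioc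
  have hpb : ∀ k, k < n → ∀ t ∈ Ioc (A k) (A (k+1)),
      |x t - (interpPoly n r (k+1) x).eval t| ≤ C₂ * Sψ := by
    intro k hk t ht
    have htI : t ∈ Icc (A k) (A (k+1)) := Ioc_subset_Icc_self ht
    rw [← hQnxk k hk t htI]
    exact hEb t (hsubk k hk htI)
  -- the chain for z
  set Z : ℕ → ℝ → ℝ := fun α s => ∑ k ∈ Finset.range n,
    ∫ t in A k..A (k+1), κd α 0 s t * (x t - (interpPoly n r (k+1) x).eval t) with hZ
  have hZd : ∀ α, α ≤ 2*r → ∀ s ∈ Ioo (0:ℝ) 1, HasDerivAt (Z α) (Z (α+1) s) s := by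
    intro α hα s hs
    apply HasDerivAt.fun_sum
    intro k hk
    simp only [Finset.mem_range] at hk
    exact paramDeriv hC₂ hds hdt hbd α (by omega) (habk k) (hsubk k hk) (hpm k hk)
      (hpb k hk) hs
  have hZc : ∀ α, α ≤ 2*r → ContinuousOn (Z α) (Icc (0:ℝ) 1) := by
    intro α hα
    apply contOn_sum
    intro k hk
    simp only [Finset.mem_range] at hk
    exact paramCont hC₂ hds hdt hbd α (by omega) (habk k) (hsubk k hk) (hpm k hk) (hpb k hk)
  -- identification of Z 0 with z = K(x - Qn x)
  have hZ0 : ∀ u ∈ Icc (0:ℝ) 1, Z 0 u = Kop κ (fun t => x t - Qn n r x t) u := by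
    intro u hu
    have hint : ∀ k, k < n → IntervalIntegrable
        (fun t => κd 0 0 u t * (x t - Qn n r x t)) volume (A k) (A (k+1)) := by
      intro k hk
      have h1 := paramInt hC₂ hdt hbd 0 (by omega) (habk k) (hsubk k hk) (hpm k hk)
        (hpb k hk) hu
      rw [intervalIntegrable_iff_integrableOn_Ioc_of_le (habk k)] at h1 ⊢
      apply h1.congr_fun _ measurableSet_Ioc
      intro t ht
      show κd 0 0 u t * (x t - (interpPoly n r (k+1) x).eval t)
        = κd 0 0 u t * (x t - Qn n r x t)
      rw [hQnxk k hk t (Ioc_subset_Icc_self ht)]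
    have hsum := intervalIntegral.sum_integral_adjacent_intervals (a := A) (μ := volume)
      (f := fun t => κd 0 0 u t * (x t - Qn n r x t)) hint
    have hA0 : A 0 = 0 := by rw [hA]; simp
    have hAn : A n = 1 := by rw [hA]; field_simp
    rw [hA0, hAn] at hsum
    have hKop : Kop κ (fun t => x t - Qn n r x t) u =
        ∫ t in (0:ℝ)..1, κd 0 0 u t * (x t - Qn n r x t) := by
      unfold Kop; rw [hκ0]
    rw [hKop, ← hsum, hZ]
    apply Finset.sum_congr rfl
    intro k hk
    simp only [Finset.mem_range] at hk
    apply intervalIntegral.integral_congr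
    intro t ht
    rw [uIcc_of_le (habk k)] at ht
    show κd 0 0 u t * (x t - (interpPoly n r (k+1) x).eval t)
      = κd 0 0 u t * (x t - Qn n r x t)
    rw [hQnxk k hk t ht]
  -- the superconvergence bound for Z (2r+1)
  set Lw : ℝ := C₂ * (C₂*Sψ) / ((2*r+2).factorial:ℝ) + C₂ * (C₂*Sψ) / ((2*r+1).factorial:ℝ)
    with hLw
  have hZb : ∀ s ∈ Icc (0:ℝ) 1, |Z (2*r+1) s| ≤ Lw * ((1:ℝ)/n)^(2*r+2) := by
    intro s hs
    have hquad : ∀ k, k < n →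
        |∫ t in A k..A (k+1), κd (2*r+1) 0 s t * (x t - (interpPoly n r (k+1) x).eval t)| ≤
          Lw * ((1:ℝ)/n)^(2*r+3) := by
      intro k hk
      have hgc : ContinuousOn (fun t => κd (2*r+1) 0 s t) (Icc (0:ℝ) 1) := fun t ht =>
        (hdt (2*r+1) 0 (by omega) s hs t ht).continuousWithinAt
      have hgl : ∀ u ∈ Icc (0:ℝ) 1, ∀ u' ∈ Icc (0:ℝ) 1,
          |κd (2*r+1) 0 s u - κd (2*r+1) 0 s u'| ≤ C₂ * |u - u'| := by
        intro u hu u' hu'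
        have := (convex_Icc (0:ℝ) 1).norm_image_sub_le_of_norm_hasDerivWithin_le
          (f := fun v => κd (2*r+1) 0 s v) (f' := fun v => κd (2*r+1) 1 s v) (C := C₂)
          (fun v hv => hdt (2*r+1) 0 (by omega) s hs v hv)
          (fun v hv => by rw [Real.norm_eq_abs]; exact hbd (2*r+1) 1 (by omega) s hs v hv)
          hu' hu
        simpa [Real.norm_eq_abs] using this
      have hq := quad n r hn hr x X (fun u _ => hX0 u) hxc
        (fun i hi => hXc i (by omega)) (fun i hi => hXd i (by omega))
        (C₂*Sψ) (C₂*Sψ) (fun u hu => hXb (2*r+1) (by omega) u hu)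
        (fun u hu => hXb (2*r+2) (by omega) u hu)
        (fun t => κd (2*r+1) 0 s t) hgc C₂ C₂ hC₂.le
        (fun u hu => hbd (2*r+1) 0 (by omega) s hs u hu) hgl
        (j := k+1) (by omega) (by omega)
      rw [← hend1 k] at hq
      exact hq
    calc |Z (2*r+1) s| ≤ ∑ k ∈ Finset.range n,
          |∫ t in A k..A (k+1), κd (2*r+1) 0 s t * (x t - (interpPoly n r (k+1) x).eval t)| := by
          rw [hZ]; exact Finset.abs_sum_le_sum_abs _ _
      _ ≤ ∑ _k ∈ Finset.range n, Lw * ((1:ℝ)/n)^(2*r+3) := by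
          apply Finset.sum_le_sum
          intro k hk
          exact hquad k (Finset.mem_range.1 hk)
      _ = (n:ℝ) * (Lw * ((1:ℝ)/n)^(2*r+3)) := by
          rw [Finset.sum_const, Finset.card_range, nsmul_eq_mul]
      _ = Lw * ((1:ℝ)/n)^(2*r+2) := by
          rw [show 2*r+3 = (2*r+2)+1 by omega, pow_succ]
          field_simp
  -- final interpolation estimate for z
  have hfinal : ∀ t ∈ Icc (0:ℝ) 1,
      |Kop κ (fun u => x u - Qn n r x u) t - Qn n r (Kop κ (fun u => x u - Qn n r x u)) t| ≤
        (Lw * ((1:ℝ)/n)^(2*r+2)) / ((2*r+1).factorial:ℝ) * ((1:ℝ)/n)^(2*r+1) := by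
    intro t ht
    exact lemE n r hn hr (Kop κ (fun u => x u - Qn n r x u)) Z hZ0 hZc hZd
      (Lw * ((1:ℝ)/n)^(2*r+2)) hZb ht
  -- wrap up
  unfold supNorm
  apply ciSup_le
  rintro ⟨t, ht⟩
  refine le_trans (hfinal t ht) (le_of_eq ?_)
  rw [hLw, show 4*r+3 = (2*r+2)+(2*r+1) by omega, pow_add]
  field_simp
  ring_nf
  field_simp
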